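/- For every nonempty set D ⊆ ℝⁿ and every closed set A ⊆ ℝⁿ containing x, the collection Tan_D(A,x) of pseudotangent sets of A at x directed along D is closed in the Attouch-Wets topology on closed sets containing 0. -/

import Mathlib

open Metric Set Filter Topology Pointwise

noncomputable section

/-- Excess of `A` over `B`: `sup_{a ∈ A} inf_{b ∈ B} |a - b|` (extended-real valued). -/
def ex {n : ℕ} (A B : Set (EuclideanSpace ℝ (Fin n))) : ENNReal :=
  ⨆ a ∈ A, EMetric.infEdist a B

/-- Relative excess of `A` in the closed ball `B(x,r)` over `B`. -/
def relEx {n : ℕ} (x : EuclideanSpace ℝ (Fin n)) (r : ℝ)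
    (A B : Set (EuclideanSpace ℝ (Fin n))) : ℝ :=
  (ex (A ∩ closedBall x r) B).toReal / r

/-- Relative Walkup–Wets distance in `B(x,r)`. -/
def WW {n : ℕ} (x : EuclideanSpace ℝ (Fin n)) (r : ℝ)
    (A B : Set (EuclideanSpace ℝ (Fin n))) : ℝ :=
  max (relEx x r A B) (relEx x r B A)

/-- Attouch–Wets convergence of a sequence of sets to `L` (all sets containing `0`). -/
def AWT {n : ℕ} (F : ℕ → Set (EuclideanSpace ℝ (Fin n)))
    (L : Set (EuclideanSpace ℝ (Fin n))) : Prop :=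
  ∀ r : ℝ, 0 < r → Filter.Tendsto (fun i => WW (0 : EuclideanSpace ℝ (Fin n)) r (F i) L)
    Filter.atTop (nhds 0)

/-- The blow-up `(A - x)/t` of a set `A` at `x` with scale `t`. -/
def blowup {n : ℕ} (A : Set (EuclideanSpace ℝ (Fin n))) (x : EuclideanSpace ℝ (Fin n))
    (t : ℝ) : Set (EuclideanSpace ℝ (Fin n)) :=
  (fun a => t⁻¹ • (a - x)) '' A

/-- `T` is a pseudotangent set of `A` at `x` directed along `D`. -/
def IsPseudoTangentAlong {n : ℕ} (A : Set (EuclideanSpace ℝ (Fin n)))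
    (x : EuclideanSpace ℝ (Fin n)) (D : Set (EuclideanSpace ℝ (Fin n)))
    (T : Set (EuclideanSpace ℝ (Fin n))) : Prop :=
  IsClosed T ∧ (0 : EuclideanSpace ℝ (Fin n)) ∈ T ∧
    ∃ (xs : ℕ → EuclideanSpace ℝ (Fin n)) (rs : ℕ → ℝ),
      (∀ i, xs i ∈ A) ∧ (∀ i, 0 < rs i) ∧
      Filter.Tendsto xs Filter.atTop (nhds x) ∧
      Filter.Tendsto rs Filter.atTop (nhds 0) ∧
      (∀ i, (rs i)⁻¹ • (xs i - x) ∈ D) ∧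
      AWT (fun i => blowup A (xs i) (rs i)) T

/-- `T` is a pseudotangent set of `A` at `x`. -/
def IsPseudoTangent {n : ℕ} (A : Set (EuclideanSpace ℝ (Fin n)))
    (x : EuclideanSpace ℝ (Fin n)) (T : Set (EuclideanSpace ℝ (Fin n))) : Prop :=
  IsPseudoTangentAlong A x Set.univ T

/-- `T` is a tangent set of `A` at `x`. -/
def IsTangent {n : ℕ} (A : Set (EuclideanSpace ℝ (Fin n)))
    (x : EuclideanSpace ℝ (Fin n)) (T : Set (EuclideanSpace ℝ (Fin n))) : Prop :=
  IsClosed T ∧ (0 : EuclideanSpace ℝ (Fin n)) ∈ T ∧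
    ∃ rs : ℕ → ℝ, (∀ i, 0 < rs i) ∧ Filter.Tendsto rs Filter.atTop (nhds 0) ∧
      AWT (fun i => blowup A x (rs i)) T

section Helpers

variable {n : ℕ}

lemma ex_mono_left {A A' B : Set (EuclideanSpace ℝ (Fin n))} (h : A ⊆ A') :
    ex A B ≤ ex A' B :=
  iSup₂_le fun a ha => le_iSup₂_of_le a (h ha) le_rfl

lemma ex_le_ofReal {A B : Set (EuclideanSpace ℝ (Fin n))} {r : ℝ}
    (h0 : (0 : EuclideanSpace ℝ (Fin n)) ∈ B) :
    ex (A ∩ closedBall 0 r) B ≤ ENNReal.ofReal r := by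
  refine iSup₂_le fun a ha => ?_
  calc EMetric.infEdist a B ≤ edist a 0 := EMetric.infEdist_le_edist_of_mem h0
    _ = ENNReal.ofReal (dist a 0) := by rw [edist_dist]
    _ ≤ ENNReal.ofReal r := ENNReal.ofReal_le_ofReal (mem_closedBall.1 ha.2)

lemma infEdist_inter_ball_le {B : Set (EuclideanSpace ℝ (Fin n))}
    {a : EuclideanSpace ℝ (Fin n)} {r r' : ℝ}
    (ha : a ∈ closedBall (0 : EuclideanSpace ℝ (Fin n)) r)
    (hd : EMetric.infEdist a B < ENNReal.ofReal (r' - r)) :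
    EMetric.infEdist a (B ∩ closedBall 0 r') ≤ EMetric.infEdist a B := by
  refine le_of_forall_gt_imp_ge_of_dense fun z hz => ?_
  have hw : EMetric.infEdist a B < min z (ENNReal.ofReal (r' - r)) := lt_min hz hd
  obtain ⟨b, hbB, hb⟩ := EMetric.infEdist_lt_iff.1 hw
  have hb1 : edist a b < z := hb.trans_le (min_le_left _ _)
  have hb2 : dist a b < r' - r := edist_lt_ofReal.1 (hb.trans_le (min_le_right _ _))
  have hbmem : b ∈ closedBall (0 : EuclideanSpace ℝ (Fin n)) r' := by
    have h3 : dist b 0 ≤ dist b a + dist a 0 := dist_triangle _ _ _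
    have ha' := mem_closedBall.1 ha
    rw [dist_comm] at hb2
    exact mem_closedBall.2 (by linarith)
  calc EMetric.infEdist a (B ∩ closedBall 0 r') ≤ edist a b :=
        EMetric.infEdist_le_edist_of_mem ⟨hbB, hbmem⟩
    _ ≤ z := hb1.le

lemma infEdist_le_infEdist_add_ex {S C : Set (EuclideanSpace ℝ (Fin n))}
    (a : EuclideanSpace ℝ (Fin n)) :
    EMetric.infEdist a C ≤ EMetric.infEdist a S + ex S C := by
  refine ENNReal.le_of_forall_pos_le_add fun ε hε htop => ?_
  have hS : EMetric.infEdist a S < EMetric.infEdist a S + ε := by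
    refine ENNReal.lt_add_right ?_ (by exact_mod_cast hε.ne')
    exact ((le_add_right le_rfl).trans_lt htop).ne
  obtain ⟨b, hbS, hb⟩ := EMetric.infEdist_lt_iff.1 hS
  have h1 : EMetric.infEdist a C ≤ edist a b + EMetric.infEdist b C :=
    EMetric.infEdist_le_edist_add_infEdist
  have h2 : EMetric.infEdist b C ≤ ex S C := le_iSup₂_of_le b hbS le_rfl
  calc EMetric.infEdist a C ≤ edist a b + ex S C := h1.trans (add_le_add le_rfl h2)
    _ ≤ (EMetric.infEdist a S + ε) + ex S C := add_le_add hb.le le_rfl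
    _ = (EMetric.infEdist a S + ex S C) + ε := by ring

lemma ex_triangle {A B C : Set (EuclideanSpace ℝ (Fin n))} {r r' : ℝ}
    (hd : ex (A ∩ closedBall 0 r) B < ENNReal.ofReal (r' - r)) :
    ex (A ∩ closedBall 0 r) C
      ≤ ex (A ∩ closedBall 0 r) B + ex (B ∩ closedBall 0 r') C := by
  refine iSup₂_le fun a ha => ?_
  have h1 : EMetric.infEdist a B ≤ ex (A ∩ closedBall 0 r) B := le_iSup₂_of_le a ha le_rfl
  have h2 : EMetric.infEdist a (B ∩ closedBall 0 r') ≤ EMetric.infEdist a B :=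
    infEdist_inter_ball_le ha.2 (h1.trans_lt hd)
  calc EMetric.infEdist a C
      ≤ EMetric.infEdist a (B ∩ closedBall 0 r') + ex (B ∩ closedBall 0 r') C :=
        infEdist_le_infEdist_add_ex a
    _ ≤ ex (A ∩ closedBall 0 r) B + ex (B ∩ closedBall 0 r') C :=
        add_le_add (h2.trans h1) le_rfl

end Helpers
section Helpers2

variable {n : ℕ}

lemma relEx_nonneg {x : EuclideanSpace ℝ (Fin n)} {r : ℝ} (hr : 0 < r)
    {A B : Set (EuclideanSpace ℝ (Fin n))} : 0 ≤ relEx x r A B :=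
  div_nonneg ENNReal.toReal_nonneg hr.le

lemma WW_nonneg {x : EuclideanSpace ℝ (Fin n)} {r : ℝ} (hr : 0 < r)
    {A B : Set (EuclideanSpace ℝ (Fin n))} : 0 ≤ WW x r A B :=
  le_max_of_le_left (relEx_nonneg hr)

lemma WW_comm {x : EuclideanSpace ℝ (Fin n)} {r : ℝ}
    {A B : Set (EuclideanSpace ℝ (Fin n))} : WW x r A B = WW x r B A :=
  max_comm _ _

lemma relEx_triangle {A B C : Set (EuclideanSpace ℝ (Fin n))} {r : ℝ} (hr : 0 < r)
    (h0B : (0 : EuclideanSpace ℝ (Fin n)) ∈ B)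
    (h0C : (0 : EuclideanSpace ℝ (Fin n)) ∈ C)
    (hAB : relEx 0 (2 * r) A B < 1 / 2) :
    relEx 0 r A C ≤ 2 * (relEx 0 (2 * r) A B + relEx 0 (2 * r) B C) := by
  set e1 := ex (A ∩ closedBall 0 (2 * r)) B with he1
  set e2 := ex (B ∩ closedBall 0 (2 * r)) C with he2
  have hf1 : e1 ≠ ⊤ := ((ex_le_ofReal h0B).trans_lt ENNReal.ofReal_lt_top).ne
  have hf2 : e2 ≠ ⊤ := ((ex_le_ofReal h0C).trans_lt ENNReal.ofReal_lt_top).ne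
  -- from hAB : e1.toReal / (2r) < 1/2 we get e1 < ofReal r
  have h2r : (0:ℝ) < 2 * r := by linarith
  have he1r : e1.toReal < r := by
    have := (div_lt_iff₀ h2r).1 hAB
    linarith
  have he1r' : e1 < ENNReal.ofReal r := by
    rw [← ENNReal.ofReal_toReal hf1]
    exact ENNReal.ofReal_lt_ofReal_iff hr |>.2 he1r
  have hsub : A ∩ closedBall 0 r ⊆ A ∩ closedBall 0 (2 * r) :=
    inter_subset_inter_right _ (closedBall_subset_closedBall (by linarith))
  have hmono : ex (A ∩ closedBall 0 r) B ≤ e1 := ex_mono_left hsub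
  have hd : ex (A ∩ closedBall 0 r) B < ENNReal.ofReal (2 * r - r) := by
    rw [show 2 * r - r = r by ring]
    exact hmono.trans_lt he1r'
  have htri : ex (A ∩ closedBall 0 r) C ≤ e1 + e2 :=
    (ex_triangle hd).trans (add_le_add hmono le_rfl)
  have hfin : ex (A ∩ closedBall 0 r) C ≠ ⊤ :=
    (htri.trans_lt (by exact ENNReal.add_lt_top.2 ⟨hf1.lt_top, hf2.lt_top⟩)).ne
  have htr : (ex (A ∩ closedBall 0 r) C).toReal ≤ e1.toReal + e2.toReal := by
    rw [← ENNReal.toReal_add hf1 hf2]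
    exact ENNReal.toReal_mono (ENNReal.add_ne_top.2 ⟨hf1, hf2⟩) htri
  calc relEx 0 r A C = (ex (A ∩ closedBall 0 r) C).toReal / r := rfl
    _ ≤ (e1.toReal + e2.toReal) / r := by gcongr
    _ = 2 * (e1.toReal / (2 * r) + e2.toReal / (2 * r)) := by field_simp
    _ = 2 * (relEx 0 (2 * r) A B + relEx 0 (2 * r) B C) := rfl

end Helpers2
section Helpers3

variable {n : ℕ}

lemma WW_triangle {A B C : Set (EuclideanSpace ℝ (Fin n))} {r : ℝ} (hr : 0 < r)
    (h0A : (0 : EuclideanSpace ℝ (Fin n)) ∈ A)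
    (h0B : (0 : EuclideanSpace ℝ (Fin n)) ∈ B)
    (h0C : (0 : EuclideanSpace ℝ (Fin n)) ∈ C)
    (hAB : WW 0 (2 * r) A B < 1 / 2) (hBC : WW 0 (2 * r) B C < 1 / 2) :
    WW 0 r A C ≤ 2 * (WW 0 (2 * r) A B + WW 0 (2 * r) B C) := by
  have h1 : relEx 0 (2 * r) A B < 1 / 2 := (le_max_left _ _).trans_lt hAB
  have h2 : relEx 0 (2 * r) C B < 1 / 2 := (le_max_right _ _).trans_lt hBC
  have t1 := relEx_triangle hr h0B h0C h1
  have t2 := relEx_triangle hr h0B h0A h2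
  refine max_le ?_ ?_
  · refine t1.trans ?_
    have a1 : relEx 0 (2 * r) A B ≤ WW 0 (2 * r) A B := le_max_left _ _
    have a2 : relEx 0 (2 * r) B C ≤ WW 0 (2 * r) B C := le_max_left _ _
    linarith
  · refine t2.trans ?_
    have a1 : relEx 0 (2 * r) C B ≤ WW 0 (2 * r) B C := le_max_right _ _
    have a2 : relEx 0 (2 * r) B A ≤ WW 0 (2 * r) A B := le_max_right _ _
    linarith

lemma relEx_radius_mono {A B : Set (EuclideanSpace ℝ (Fin n))} {r m : ℝ}
    (hr : 0 < r) (hrm : r ≤ m)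
    (h0B : (0 : EuclideanSpace ℝ (Fin n)) ∈ B) :
    relEx 0 r A B ≤ (m / r) * relEx 0 m A B := by
  have hm : 0 < m := hr.trans_le hrm
  have hfin : ex (A ∩ closedBall 0 m) B ≠ ⊤ :=
    ((ex_le_ofReal h0B).trans_lt ENNReal.ofReal_lt_top).ne
  have hmono : (ex (A ∩ closedBall 0 r) B).toReal ≤ (ex (A ∩ closedBall 0 m) B).toReal :=
    ENNReal.toReal_mono hfin
      (ex_mono_left (inter_subset_inter_right _ (closedBall_subset_closedBall hrm)))
  calc relEx 0 r A B = (ex (A ∩ closedBall 0 r) B).toReal / r := rfl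
    _ ≤ (ex (A ∩ closedBall 0 m) B).toReal / r := by gcongr
    _ = (m / r) * ((ex (A ∩ closedBall 0 m) B).toReal / m) := by field_simp
    _ = (m / r) * relEx 0 m A B := rfl

lemma WW_radius_mono {A B : Set (EuclideanSpace ℝ (Fin n))} {r m : ℝ}
    (hr : 0 < r) (hrm : r ≤ m)
    (h0A : (0 : EuclideanSpace ℝ (Fin n)) ∈ A)
    (h0B : (0 : EuclideanSpace ℝ (Fin n)) ∈ B) :
    WW 0 r A B ≤ (m / r) * WW 0 m A B := by
  have hc : 0 ≤ m / r := div_nonneg (hr.trans_le hrm).le hr.le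
  refine max_le ?_ ?_
  · exact (relEx_radius_mono hr hrm h0B).trans
      (mul_le_mul_of_nonneg_left (le_max_left _ _) hc)
  · exact (relEx_radius_mono hr hrm h0A).trans
      (mul_le_mul_of_nonneg_left (le_max_right _ _) hc)

lemma zero_mem_blowup {A : Set (EuclideanSpace ℝ (Fin n))}
    {y : EuclideanSpace ℝ (Fin n)} {t : ℝ} (hy : y ∈ A) :
    (0 : EuclideanSpace ℝ (Fin n)) ∈ blowup A y t :=
  ⟨y, hy, by simp⟩

end Helpers3
/-- The collection of pseudotangent sets of `A` at `x` directed along `D` is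
(sequentially) closed in the Attouch–Wets topology on closed sets containing `0`. -/
theorem isPseudoTangentAlong_closed {n : ℕ} (A D : Set (EuclideanSpace ℝ (Fin n)))
    (hD : D.Nonempty) (hAc : IsClosed A) (x : EuclideanSpace ℝ (Fin n)) (hx : x ∈ A)
    (T : ℕ → Set (EuclideanSpace ℝ (Fin n)))
    (hT : ∀ i, IsPseudoTangentAlong A x D (T i))
    (L : Set (EuclideanSpace ℝ (Fin n))) (hLc : IsClosed L)
    (hL0 : (0 : EuclideanSpace ℝ (Fin n)) ∈ L) (hTL : AWT T L) :
    IsPseudoTangentAlong A x D L := by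
  choose hTc hT0 xs rs hxsA hrspos hxsx hrs0 hDmem hAW using hT
  refine ⟨hLc, hL0, ?_⟩
  -- the diagonal choice
  have key : ∀ k : ℕ, ∃ i j,
      (∀ m ∈ Finset.Icc 1 (k + 1),
        WW 0 (2 * (m : ℝ)) (T i) L < 1 / (4 * ((k : ℝ) + 1)) ∧
        WW 0 (2 * (m : ℝ)) (blowup A (xs i j) (rs i j)) (T i) < 1 / (4 * ((k : ℝ) + 1))) ∧
      dist (xs i j) x < 1 / ((k : ℝ) + 1) ∧ rs i j < 1 / ((k : ℝ) + 1) := by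
    intro k
    have hεpos : (0 : ℝ) < 1 / (4 * ((k : ℝ) + 1)) := by positivity
    have hev1 : ∀ᶠ i in atTop, ∀ m ∈ Finset.Icc 1 (k + 1),
        WW 0 (2 * (m : ℝ)) (T i) L < 1 / (4 * ((k : ℝ) + 1)) := by
      rw [eventually_all_finset]
      intro m hm
      have hm1 : 1 ≤ m := (Finset.mem_Icc.1 hm).1
      have hmpos : (0 : ℝ) < 2 * (m : ℝ) := by
        have : (1 : ℝ) ≤ (m : ℝ) := by exact_mod_cast hm1
        linarith
      exact (hTL _ hmpos).eventually_lt_const hεpos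
    obtain ⟨i, hi⟩ := hev1.exists
    have hev2 : ∀ᶠ j in atTop, (∀ m ∈ Finset.Icc 1 (k + 1),
        WW 0 (2 * (m : ℝ)) (blowup A (xs i j) (rs i j)) (T i) < 1 / (4 * ((k : ℝ) + 1))) ∧
        dist (xs i j) x < 1 / ((k : ℝ) + 1) ∧ rs i j < 1 / ((k : ℝ) + 1) := by
      have e1 : ∀ᶠ j in atTop, ∀ m ∈ Finset.Icc 1 (k + 1),
          WW 0 (2 * (m : ℝ)) (blowup A (xs i j) (rs i j)) (T i) < 1 / (4 * ((k : ℝ) + 1)) := by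
        rw [eventually_all_finset]
        intro m hm
        have hm1 : 1 ≤ m := (Finset.mem_Icc.1 hm).1
        have hmpos : (0 : ℝ) < 2 * (m : ℝ) := by
          have : (1 : ℝ) ≤ (m : ℝ) := by exact_mod_cast hm1
          linarith
        exact (hAW i _ hmpos).eventually_lt_const hεpos
      have e2 : ∀ᶠ j in atTop, dist (xs i j) x < 1 / ((k : ℝ) + 1) := by
        have hb : ball x (1 / ((k : ℝ) + 1)) ∈ nhds x := ball_mem_nhds x (by positivity)
        exact ((hxsx i).eventually hb).mono fun j hj => mem_ball.1 hj
      have e3 : ∀ᶠ j in atTop, rs i j < 1 / ((k : ℝ) + 1) :=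
        (hrs0 i).eventually_lt_const (by positivity)
      exact e1.and (e2.and e3)
    obtain ⟨j, hj⟩ := hev2.exists
    exact ⟨i, j, fun m hm => ⟨hi m hm, hj.1 m hm⟩, hj.2⟩
  choose I J hkey hdist hr' using key
  refine ⟨fun k => xs (I k) (J k), fun k => rs (I k) (J k),
    fun k => hxsA _ _, fun k => hrspos _ _, ?_, ?_, fun k => hDmem _ _, ?_⟩
  · -- xs converge to x
    refine tendsto_iff_dist_tendsto_zero.2 (squeeze_zero (fun k => dist_nonneg)
      (fun k => (hdist k).le) tendsto_one_div_add_atTop_nhds_zero_nat)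
  · -- rs converge to 0
    exact squeeze_zero (fun k => (hrspos _ _).le) (fun k => (hr' k).le)
      tendsto_one_div_add_atTop_nhds_zero_nat
  · -- AWT convergence to L
    intro r hrpos
    set m : ℕ := ⌈r⌉₊ with hm
    have hm1 : 1 ≤ m := Nat.one_le_iff_ne_zero.2 (Nat.ceil_pos.2 hrpos).ne'
    have hmr : r ≤ (m : ℝ) := Nat.le_ceil r
    have hmpos : (0 : ℝ) < (m : ℝ) := hrpos.trans_le hmr
    refine squeeze_zero' (g := fun k : ℕ => ((m : ℝ) / r) * (1 / ((k : ℝ) + 1)))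
      (Eventually.of_forall fun k => WW_nonneg hrpos) ?_ ?_
    · -- eventual bound
      filter_upwards [eventually_ge_atTop m] with k hk
      have hmIcc : m ∈ Finset.Icc 1 (k + 1) := Finset.mem_Icc.2 ⟨hm1, hk.trans (Nat.le_succ k)⟩
      obtain ⟨h1, h2⟩ := hkey k m hmIcc
      have hεle : 1 / (4 * ((k : ℝ) + 1)) ≤ 1 / 4 := by
        rw [div_le_div_iff₀ (by positivity) (by norm_num)]
        have : (0:ℝ) ≤ (k:ℝ) := Nat.cast_nonneg k
        linarith
      have hhalf : (1 : ℝ) / 4 < 1 / 2 := by norm_num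
      have h0B : (0 : EuclideanSpace ℝ (Fin n)) ∈ blowup A (xs (I k) (J k)) (rs (I k) (J k)) :=
        zero_mem_blowup (hxsA _ _)
      have htri := WW_triangle hmpos h0B (hT0 (I k)) hL0
        (h2.trans_le hεle |>.trans hhalf)
        (h1.trans_le hεle |>.trans hhalf)
      have hWWm : WW 0 (m : ℝ) (blowup A (xs (I k) (J k)) (rs (I k) (J k))) L
          ≤ 1 / ((k : ℝ) + 1) := by
        refine htri.trans ?_
        have h4 : 4 * (1 / (4 * ((k : ℝ) + 1))) = 1 / ((k : ℝ) + 1) := by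
          field_simp
        linarith [h1.le, h2.le]
      calc WW 0 r (blowup A (xs (I k) (J k)) (rs (I k) (J k))) L
          ≤ ((m : ℝ) / r) * WW 0 (m : ℝ) (blowup A (xs (I k) (J k)) (rs (I k) (J k))) L :=
            WW_radius_mono hrpos hmr h0B hL0
        _ ≤ ((m : ℝ) / r) * (1 / ((k : ℝ) + 1)) := by
            exact mul_le_mul_of_nonneg_left hWWm (by positivity)
    · -- the bound tends to 0
      have := tendsto_one_div_add_atTop_nhds_zero_nat.const_mul ((m : ℝ) / r)
      simpa using this
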